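/- Every Farey triple q̄ different from {1, 0, ∞} can be mutated in exactly one direction so that the sum of complexities decreases: there is exactly one element p ∈ q̄ such that the sum of the complexities of the elements of μ_p(q̄) is strictly smaller than the sum of the complexities of the elements of q̄. -/

import Mathlib

/-- `ℚ∞ = ℚ ∪ {∞}`, ordered with `∞ = ⊤` as the greatest element. -/
abbrev QInf : Type := WithTop ℚ

/-- The numerator `d(q)` of the reduced representation `q = d(q)/r(q)`; `d(∞) = 1`. -/
def fnum : QInf → ℤ := WithTop.recTopCoe 1 (fun q => q.num)

/-- The denominator `r(q)` of the reduced representation `q = d(q)/r(q)`; `r(∞) = 0`. -/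
def fden : QInf → ℤ := WithTop.recTopCoe 0 (fun q => (q.den : ℤ))

/-- The element of `ℚ∞` represented by the fraction `a / b`: it is `∞` if `b = 0`,
and otherwise the rational number `a / b` (normalized so that the denominator is
positive and the fraction is in lowest terms). -/
def fmk (a b : ℤ) : QInf := if b = 0 then (⊤ : QInf) else (((a : ℚ) / (b : ℚ)) : ℚ)

/-- The Farey distance `Δ(p,q) = |d(p)r(q) - d(q)r(p)|`. -/
def fdist (p q : QInf) : ℤ := |fnum p * fden q - fnum q * fden p|

/-- `p` and `q` are Farey neighbours if `Δ(p,q) = 1`. -/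
def FareyNbr (p q : QInf) : Prop := fdist p q = 1

/-- The Farey sum `p ⊕ q = (d(p) + d(q)) / (r(p) + r(q))`. -/
def fsum (p q : QInf) : QInf := fmk (fnum p + fnum q) (fden p + fden q)

/-- The Farey difference `p ⊖ q = (d(p) - d(q)) / (r(p) - r(q))`. -/
def fdiff (p q : QInf) : QInf := fmk (fnum p - fnum q) (fden p - fden q)

/-- A Farey triple: a three-element subset of `ℚ∞` whose elements are pairwise
Farey neighbours. -/
def IsFareyTriple (s : Set QInf) : Prop := s.ncard = 3 ∧ s.Pairwise FareyNbr

/-- The element replacing `p` in the mutation of the Farey triple `{p, q, r}` in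
direction `p`: it is `q ⊖ r` if `p` lies strictly between `q` and `r`, and `q ⊕ r`
otherwise. -/
def fareyMutEl (p q r : QInf) : QInf :=
  if (q < p ∧ p < r) ∨ (r < p ∧ p < q) then fdiff q r else fsum q r

/-- The mutation of the Farey triple `{p, q, r}` in direction `p`. -/
def fareyMut (p q r : QInf) : Set QInf := {fareyMutEl p q r, q, r}

/-- The complexity `c(q) = |d(q)| + r(q) + |d(q) - r(q)|`. -/
def complexity (x : QInf) : ℤ := |fnum x| + fden x + |fnum x - fden x|

/-! ### Auxiliary machinery -/

/-- Integer complexity function. -/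
def Kc (a b : ℤ) : ℤ := (a.natAbs : ℤ) + b.natAbs + (a - b).natAbs

lemma Kc_congr {a b a' b' : ℤ} (h1 : a = a') (h2 : b = b') : Kc a b = Kc a' b' := by
  rw [h1, h2]

lemma fnum_top : fnum ⊤ = 1 := rfl
lemma fden_top : fden ⊤ = 0 := rfl
lemma fnum_coe (q : ℚ) : fnum (q : QInf) = q.num := rfl
lemma fden_coe (q : ℚ) : fden (q : QInf) = (q.den : ℤ) := rfl

lemma fden_nonneg (x : QInf) : 0 ≤ fden x := by
  induction x using WithTop.recTopCoe with
  | top => simp [fden_top]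
  | coe q => rw [fden_coe]; positivity

lemma fgcd (x : QInf) : Int.gcd (fnum x) (fden x) = 1 := by
  induction x using WithTop.recTopCoe with
  | top => rfl
  | coe q => simpa [fnum_coe, fden_coe, Int.gcd, Int.natAbs_natCast] using q.reduced

lemma fden_eq_zero {x : QInf} (h : fden x = 0) : x = ⊤ := by
  induction x using WithTop.recTopCoe with
  | top => rfl
  | coe q => rw [fden_coe] at h; exact absurd h (by exact_mod_cast q.den_nz)

lemma fnum_of_fden_eq_zero {x : QInf} (h : fden x = 0) : fnum x = 1 := by
  rw [fden_eq_zero h]; rfl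

lemma qinf_ext {x y : QInf} (h1 : fnum x = fnum y) (h2 : fden x = fden y) : x = y := by
  induction x using WithTop.recTopCoe with
  | top => exact (fden_eq_zero (by rw [← h2]; rfl)).symm
  | coe q =>
    induction y using WithTop.recTopCoe with
    | top => exact absurd (fden_eq_zero (by rw [h2]; rfl)) (by simp)
    | coe s =>
      rw [fnum_coe, fnum_coe] at h1
      rw [fden_coe, fden_coe] at h2
      exact_mod_cast congrArg (fun t : ℚ => (t : QInf)) (Rat.ext h1 (by exact_mod_cast h2))

lemma lt_iff_cross (x y : QInf) : x < y ↔ fnum x * fden y < fnum y * fden x := by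
  induction x using WithTop.recTopCoe with
  | top =>
    induction y using WithTop.recTopCoe with
    | top => simp
    | coe s => simp [fnum_top, fden_top, fnum_coe, fden_coe]
  | coe q =>
    induction y using WithTop.recTopCoe with
    | top => simp [fnum_top, fden_top, fnum_coe, fden_coe, WithTop.coe_lt_top, q.pos]
    | coe s => rw [WithTop.coe_lt_coe, fnum_coe, fden_coe, fnum_coe, fden_coe, Rat.lt_iff]

lemma fmk_pos {a b : ℤ} (h : Int.gcd a b = 1) (hb : 0 < b) :
    fnum (fmk a b) = a ∧ fden (fmk a b) = b := by
  rw [fmk, if_neg hb.ne']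
  exact ⟨Rat.num_div_eq_of_coprime hb h, Rat.den_div_eq_of_coprime hb h⟩

lemma fmk_neg_neg (a b : ℤ) : fmk (-a) (-b) = fmk a b := by
  unfold fmk
  rcases eq_or_ne b 0 with rfl | hb
  · norm_num
  · rw [if_neg hb, if_neg (by simpa using hb)]
    push_cast
    rw [neg_div_neg_eq]

lemma complexity_fmk {a b : ℤ} (h : Int.gcd a b = 1) : complexity (fmk a b) = Kc a b := by
  rcases lt_trichotomy b 0 with hb | rfl | hb
  · rw [← fmk_neg_neg a b]
    have h' : Int.gcd (-a) (-b) = 1 := by rwa [Int.neg_gcd, Int.gcd_neg]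
    obtain ⟨h1, h2⟩ := fmk_pos h' (by omega)
    rw [complexity, h1, h2, Kc]
    have e1 := Int.abs_eq_natAbs (-a)
    have e2 := Int.abs_eq_natAbs (-a - -b)
    omega
  · rw [fmk, if_pos rfl]
    have : a.natAbs = 1 := by simpa using h
    show |(1:ℤ)| + 0 + |1 - 0| = _
    simp only [Kc, sub_zero, this]
    norm_num
  · obtain ⟨h1, h2⟩ := fmk_pos h hb
    rw [complexity, h1, h2, Kc]
    have := Int.abs_eq_natAbs a
    have := Int.abs_eq_natAbs (a - b)
    omega

lemma complexity_K (x : QInf) : complexity x = Kc (fnum x) (fden x) := by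
  rw [complexity, Kc]
  have := fden_nonneg x
  have := Int.abs_eq_natAbs (fnum x)
  have := Int.abs_eq_natAbs (fnum x - fden x)
  omega

lemma gcd_of_comb {u v x y : ℤ}
    (h : u * x - v * y = 1 ∨ u * x - v * y = -1) : Int.gcd u v = 1 := by
  have h1 : (Int.gcd u v : ℤ) ∣ u * x - v * y :=
    dvd_sub ((Int.gcd_dvd_left u v).mul_right x) ((Int.gcd_dvd_right u v).mul_right y)
  have h2 : (Int.gcd u v : ℤ) ∣ 1 := by
    rcases h with h | h <;> rw [h] at h1
    · exact h1
    · exact (dvd_neg).mp h1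
  have h3 := Int.isUnit_iff.mp (isUnit_of_dvd_one h2)
  omega

lemma nbr_cases {x y : QInf} (h : FareyNbr x y) :
    fnum x * fden y - fnum y * fden x = 1 ∨ fnum x * fden y - fnum y * fden x = -1 :=
  abs_eq (by norm_num : (0:ℤ) ≤ 1) |>.mp h

/-! ### The combinatorial core -/

lemma amo12 (a b c d : ℤ) :
    ¬(Kc (a-c) (b-d) < Kc (a+c) (b+d) ∧ Kc (a+2*c) (b+2*d) < Kc a b) := by
  simp only [Kc]; omega

lemma amo13 (a b c d : ℤ) :
    ¬(Kc (a-c) (b-d) < Kc (a+c) (b+d) ∧ Kc (2*a+c) (2*b+d) < Kc c d) := by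
  simp only [Kc]; omega

lemma amo23 (a b c d : ℤ) :
    ¬(Kc (a+2*c) (b+2*d) < Kc a b ∧ Kc (2*a+c) (2*b+d) < Kc c d) := by
  simp only [Kc]; omega

lemma alo_pos (a b c d : ℤ) (hb : 0 ≤ b) (hd : 0 ≤ d)
    (hb0 : b = 0 → a = 1) (hd0 : d = 0 → c = 1)
    (hdet : a * d - b * c = 1)
    (hbase : ¬(a = 1 ∧ b = 0 ∧ c = 0 ∧ d = 1)) :
    Kc (a-c) (b-d) < Kc (a+c) (b+d) ∨ Kc (a+2*c) (b+2*d) < Kc a b ∨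
      Kc (2*a+c) (2*b+d) < Kc c d := by
  rcases eq_or_lt_of_le hb with hb' | hb'
  · -- b = 0, so a = 1, d = 1
    have hbz : b = 0 := hb'.symm
    subst hbz
    have ha : a = 1 := hb0 rfl
    subst ha
    have hd1 : d = 1 := by omega
    subst hd1
    have hc : c ≠ 0 := fun h => hbase ⟨rfl, rfl, h, rfl⟩
    rcases lt_or_gt_of_ne hc with h | h
    · right; right; simp only [Kc]; omega
    · left; simp only [Kc]; omega
  · rcases eq_or_lt_of_le hd with hd' | hd'
    · -- d = 0, c = 1 : contradiction
      have hdz : d = 0 := hd'.symm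
      subst hdz
      have hc : c = 1 := hd0 rfl
      subst hc
      omega
    · -- b ≥ 1, d ≥ 1 : always the first disjunct
      left
      rcases le_or_gt b a with h1 | h1
      · rcases le_or_gt d c with h2 | h2
        · simp only [Kc]; omega
        · rcases le_or_gt 0 c with h3 | h3
          · -- derive b = 1, a = 1, d = c + 1
            have k1 : b * (c+1) ≤ a * d := by
              apply mul_le_mul h1 (by omega) (by omega) (by omega)
            have hble : b ≤ 1 := by nlinarith
            have hb1 : b = 1 := le_antisymm hble (by omega)
            subst hb1
            have had : a * d = c + 1 := by linarith
            have ha1 : a ≤ 1 := by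
              have h5 : a * d ≤ 1 * d := by linarith
              exact le_of_mul_le_mul_right h5 hd'
            have ha : a = 1 := le_antisymm ha1 h1
            subst ha
            have : d = c + 1 := by linarith
            subst this
            simp only [Kc]; omega
          · have p1 : 0 < a * d := mul_pos (by omega) hd'
            have p2 : b * c < 0 := mul_neg_of_pos_of_neg hb' h3
            omega
      · rcases le_or_gt 0 a with h3 | h3
        · rcases le_or_gt d c with h2 | h2
          · have k1 : (a+1) * c ≤ b * c := by
              apply mul_le_mul_of_nonneg_right (by omega) (by omega)
            have k2 : (a+1) * d ≤ (a+1) * c := by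
              apply mul_le_mul_of_nonneg_left h2 (by omega)
            nlinarith
          · rcases le_or_gt 0 c with h4 | h4
            · simp only [Kc]; omega
            · -- derive a = 0, b = 1, c = -1
              have p1 : 0 ≤ a * d := mul_nonneg h3 hd
              have p2 : b * c < 0 := mul_neg_of_pos_of_neg hb' h4
              have hbc : b * c = -1 := by omega
              have had : a * d = 0 := by omega
              have ha0 : a = 0 := by
                rcases mul_eq_zero.mp had with h | h
                · exact h
                · omega
              have hdvd : b ∣ (1:ℤ) := ⟨-c, by linarith⟩
              have hb1 : b = 1 := by
                rcases Int.isUnit_iff.mp (isUnit_of_dvd_one hdvd) with h | h <;> omega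
              have hc1 : c = -1 := by rw [hb1] at hbc; omega
              subst ha0; subst hb1; subst hc1
              simp only [Kc]; omega
        · rcases le_or_gt 0 c with h4 | h4
          · have p1 : a * d < 0 := mul_neg_of_neg_of_pos h3 hd'
            have p2 : 0 ≤ b * c := mul_nonneg hb h4
            omega
          · simp only [Kc]; omega

lemma core (a b c d : ℤ) (hb : 0 ≤ b) (hd : 0 ≤ d)
    (hb0 : b = 0 → a = 1) (hd0 : d = 0 → c = 1)
    (hdet : a * d - b * c = 1 ∨ a * d - b * c = -1)
    (hbase1 : ¬(a = 1 ∧ b = 0 ∧ c = 0 ∧ d = 1))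
    (hbase2 : ¬(a = 0 ∧ b = 1 ∧ c = 1 ∧ d = 0)) :
    Kc (a-c) (b-d) < Kc (a+c) (b+d) ∨ Kc (a+2*c) (b+2*d) < Kc a b ∨
      Kc (2*a+c) (2*b+d) < Kc c d := by
  rcases hdet with h | h
  · exact alo_pos a b c d hb hd hb0 hd0 h hbase1
  · have h' : c * b - d * a = 1 := by linarith
    have := alo_pos c d a b hd hb hd0 hb0 h' (by tauto)
    have e1 : Kc (c - a) (d - b) = Kc (a - c) (b - d) := by simp only [Kc]; omega
    have e2 : Kc (c + a) (d + b) = Kc (a + c) (b + d) := Kc_congr (by ring) (by ring)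
    have e3 : Kc (c + 2*a) (d + 2*b) = Kc (2*a+c) (2*b+d) := Kc_congr (by ring) (by ring)
    have e4 : Kc (2*c + a) (2*d + b) = Kc (a+2*c) (b+2*d) := Kc_congr (by ring) (by ring)
    rw [e1, e2, e3, e4] at this
    tauto

/-! ### Structure of Farey triples -/

lemma decomp (p q r : QInf) (hpq : p ≠ q)
    (h1 : FareyNbr p q) (h2 : FareyNbr p r) (h3 : FareyNbr q r) :
    (fnum p = fnum q + fnum r ∧ fden p = fden q + fden r) ∨
    (fnum q = fnum p + fnum r ∧ fden q = fden p + fden r) ∨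
    (fnum r = fnum p + fnum q ∧ fden r = fden p + fden q) := by
  have e1 : (fnum q * fden r - fnum r * fden q) * fnum p
      = (fnum p * fden r - fnum r * fden p) * fnum q
        + (fnum q * fden p - fnum p * fden q) * fnum r := by ring
  have e2 : (fnum q * fden r - fnum r * fden q) * fden p
      = (fnum p * fden r - fnum r * fden p) * fden q
        + (fnum q * fden p - fnum p * fden q) * fden r := by ring
  have hA := nbr_cases h3
  have hB := nbr_cases h2
  have hC' := nbr_cases h1
  have hC : fnum q * fden p - fnum p * fden q = 1 ∨
      fnum q * fden p - fnum p * fden q = -1 := by omega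
  have hdp := fden_nonneg p
  have hdq := fden_nonneg q
  have hdr := fden_nonneg r
  have hbad : ¬(fden p = 0 ∧ fden q = 0) := by
    rintro ⟨u1, u2⟩
    exact hpq ((fden_eq_zero u1).trans (fden_eq_zero u2).symm)
  rcases hA with hA | hA <;> rcases hB with hB | hB <;> rcases hC with hC | hC <;>
    rw [hA, hB, hC] at e1 e2 <;> omega

lemma mut_eval (x y z : QInf)
    (hn : fnum x = fnum y + fnum z) (hd : fden x = fden y + fden z)
    (hA : fnum y * fden z - fnum z * fden y = 1 ∨
      fnum y * fden z - fnum z * fden y = -1) :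
    fareyMutEl x y z = fmk (fnum y - fnum z) (fden y - fden z) ∧
    fareyMutEl y x z = fmk (fnum y + 2 * fnum z) (fden y + 2 * fden z) ∧
    fareyMutEl y z x = fmk (fnum y + 2 * fnum z) (fden y + 2 * fden z) ∧
    fareyMutEl z x y = fmk (2 * fnum y + fnum z) (2 * fden y + fden z) ∧
    fareyMutEl z y x = fmk (2 * fnum y + fnum z) (2 * fden y + fden z) := by
  have hcondy : ¬((x < y ∧ y < z) ∨ (z < y ∧ y < x)) := by
    rintro (⟨u1, u2⟩ | ⟨u1, u2⟩) <;>
      rw [lt_iff_cross] at u1 u2 <;> simp only [hn, hd] at u1 u2 <;>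
      rcases hA with h | h <;> nlinarith [h]
  have hcondz : ¬((x < z ∧ z < y) ∨ (y < z ∧ z < x)) := by
    rintro (⟨u1, u2⟩ | ⟨u1, u2⟩) <;>
      rw [lt_iff_cross] at u1 u2 <;> simp only [hn, hd] at u1 u2 <;>
      rcases hA with h | h <;> nlinarith [h]
  refine ⟨?_, ?_, ?_, ?_, ?_⟩
  · have hcond : (y < x ∧ x < z) ∨ (z < x ∧ x < y) := by
      rcases hA with h | h
      · refine Or.inr ⟨?_, ?_⟩ <;> rw [lt_iff_cross, hn, hd] <;> nlinarith [h]
      · refine Or.inl ⟨?_, ?_⟩ <;> rw [lt_iff_cross, hn, hd] <;> nlinarith [h]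
    rw [fareyMutEl, if_pos hcond, fdiff]
  · rw [fareyMutEl, if_neg hcondy, fsum, hn, hd]
    congr 1 <;> ring
  · rw [fareyMutEl, if_neg (fun h => hcondy (Or.symm h)), fsum, hn, hd]
    congr 1 <;> ring
  · rw [fareyMutEl, if_neg hcondz, fsum, hn, hd]
    congr 1 <;> ring
  · rw [fareyMutEl, if_neg (fun h => hcondz (Or.symm h)), fsum, hn, hd]
    congr 1 <;> ring

lemma fnum_zero : fnum (0 : QInf) = 0 := rfl
lemma fden_zero : fden (0 : QInf) = 1 := rfl
lemma fnum_one : fnum (1 : QInf) = 1 := rfl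
lemma fden_one : fden (1 : QInf) = 1 := rfl


set_option maxHeartbeats 2000000 in
/-- Every Farey triple `{p, q, r}` different from `{1, 0, ∞}` can be mutated in
exactly one direction so that the sum of complexities strictly decreases. -/
theorem fareyTriple_unique_decreasing_mutation (p q r : QInf)
    (hpq : p ≠ q) (hpr : p ≠ r) (hqr : q ≠ r)
    (h1 : FareyNbr p q) (h2 : FareyNbr p r) (h3 : FareyNbr q r)
    (hne : ({p, q, r} : Set QInf) ≠ {1, 0, ⊤}) :
    ((complexity (fareyMutEl p q r) + complexity q + complexity r <
        complexity p + complexity q + complexity r) ∧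
      ¬(complexity (fareyMutEl q p r) + complexity p + complexity r <
        complexity p + complexity q + complexity r) ∧
      ¬(complexity (fareyMutEl r p q) + complexity p + complexity q <
        complexity p + complexity q + complexity r)) ∨
    (¬(complexity (fareyMutEl p q r) + complexity q + complexity r <
        complexity p + complexity q + complexity r) ∧
      (complexity (fareyMutEl q p r) + complexity p + complexity r <
        complexity p + complexity q + complexity r) ∧
      ¬(complexity (fareyMutEl r p q) + complexity p + complexity q <
        complexity p + complexity q + complexity r)) ∨
    (¬(complexity (fareyMutEl p q r) + complexity q + complexity r <
        complexity p + complexity q + complexity r) ∧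
      ¬(complexity (fareyMutEl q p r) + complexity p + complexity r <
        complexity p + complexity q + complexity r) ∧
      (complexity (fareyMutEl r p q) + complexity p + complexity q <
        complexity p + complexity q + complexity r)) := by
  rcases decomp p q r hpq h1 h2 h3 with ⟨hn, hd⟩ | ⟨hn, hd⟩ | ⟨hn, hd⟩
  · -- p = q ⊕ r
    have hA := nbr_cases h3
    obtain ⟨m1, m2, m2', m3, m3'⟩ := mut_eval p q r hn hd hA
    have g1 : Int.gcd (fnum q - fnum r) (fden q - fden r) = 1 :=
      gcd_of_comb (x := fden q) (y := fnum q) (by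
        rcases hA with h | h
        · exact Or.inl (by linear_combination h)
        · exact Or.inr (by linear_combination h))
    have g2 : Int.gcd (fnum q + 2 * fnum r) (fden q + 2 * fden r) = 1 :=
      gcd_of_comb (x := fden r) (y := fnum r) (by
        rcases hA with h | h
        · exact Or.inl (by linear_combination h)
        · exact Or.inr (by linear_combination h))
    have g3 : Int.gcd (2 * fnum q + fnum r) (2 * fden q + fden r) = 1 :=
      gcd_of_comb (x := fden q) (y := fnum q) (by
        rcases hA with h | h
        · exact Or.inr (by linear_combination -h)
        · exact Or.inl (by linear_combination -h))
    have hbase1 : ¬(fnum q = 1 ∧ fden q = 0 ∧ fnum r = 0 ∧ fden r = 1) := by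
      rintro ⟨u1, u2, u3, u4⟩
      apply hne
      have hq : q = ⊤ := fden_eq_zero u2
      have hr : r = (0 : QInf) := qinf_ext (by rw [u3, fnum_zero]) (by rw [u4, fden_zero])
      have hp : p = (1 : QInf) :=
        qinf_ext (by rw [hn, u1, u3, fnum_one]; norm_num) (by rw [hd, u2, u4, fden_one]; norm_num)
      subst hp; subst hq; subst hr
      ext t; simp only [Set.mem_insert_iff, Set.mem_singleton_iff]; try tauto
    have hbase2 : ¬(fnum q = 0 ∧ fden q = 1 ∧ fnum r = 1 ∧ fden r = 0) := by
      rintro ⟨u1, u2, u3, u4⟩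
      apply hne
      have hr : r = ⊤ := fden_eq_zero u4
      have hq : q = (0 : QInf) := qinf_ext (by rw [u1, fnum_zero]) (by rw [u2, fden_zero])
      have hp : p = (1 : QInf) :=
        qinf_ext (by rw [hn, u1, u3, fnum_one]; norm_num) (by rw [hd, u2, u4, fden_one]; norm_num)
      subst hp; subst hq; subst hr
      ext t; simp only [Set.mem_insert_iff, Set.mem_singleton_iff]; try tauto
    have hcore := core (fnum q) (fden q) (fnum r) (fden r) (fden_nonneg q) (fden_nonneg r)
      (fun h => fnum_of_fden_eq_zero h) (fun h => fnum_of_fden_eq_zero h)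
      (by rcases hA with h | h
          · exact Or.inl (by linear_combination h)
          · exact Or.inr (by linear_combination h)) hbase1 hbase2
    rw [m1, m2, m3, complexity_fmk g1, complexity_fmk g2, complexity_fmk g3,
      complexity_K p, complexity_K q, complexity_K r, hn, hd]
    rcases hcore with k | k | k
    · exact Or.inl ⟨by linarith,
        fun hh => amo12 (fnum q) (fden q) (fnum r) (fden r) ⟨k, by linarith⟩,
        fun hh => amo13 (fnum q) (fden q) (fnum r) (fden r) ⟨k, by linarith⟩⟩
    · exact Or.inr (Or.inl ⟨
        fun hh => amo12 (fnum q) (fden q) (fnum r) (fden r) ⟨by linarith, k⟩,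
        by linarith,
        fun hh => amo23 (fnum q) (fden q) (fnum r) (fden r) ⟨k, by linarith⟩⟩)
    · exact Or.inr (Or.inr ⟨
        fun hh => amo13 (fnum q) (fden q) (fnum r) (fden r) ⟨by linarith, k⟩,
        fun hh => amo23 (fnum q) (fden q) (fnum r) (fden r) ⟨by linarith, k⟩,
        by linarith⟩)
  · -- q = p ⊕ r
    have hA := nbr_cases h2
    obtain ⟨m1, m2, m2', m3, m3'⟩ := mut_eval q p r hn hd hA
    have g1 : Int.gcd (fnum p - fnum r) (fden p - fden r) = 1 :=
      gcd_of_comb (x := fden p) (y := fnum p) (by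
        rcases hA with h | h
        · exact Or.inl (by linear_combination h)
        · exact Or.inr (by linear_combination h))
    have g2 : Int.gcd (fnum p + 2 * fnum r) (fden p + 2 * fden r) = 1 :=
      gcd_of_comb (x := fden r) (y := fnum r) (by
        rcases hA with h | h
        · exact Or.inl (by linear_combination h)
        · exact Or.inr (by linear_combination h))
    have g3 : Int.gcd (2 * fnum p + fnum r) (2 * fden p + fden r) = 1 :=
      gcd_of_comb (x := fden p) (y := fnum p) (by
        rcases hA with h | h
        · exact Or.inr (by linear_combination -h)
        · exact Or.inl (by linear_combination -h))
    have hbase1 : ¬(fnum p = 1 ∧ fden p = 0 ∧ fnum r = 0 ∧ fden r = 1) := by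
      rintro ⟨u1, u2, u3, u4⟩
      apply hne
      have hp : p = ⊤ := fden_eq_zero u2
      have hr : r = (0 : QInf) := qinf_ext (by rw [u3, fnum_zero]) (by rw [u4, fden_zero])
      have hq : q = (1 : QInf) :=
        qinf_ext (by rw [hn, u1, u3, fnum_one]; norm_num) (by rw [hd, u2, u4, fden_one]; norm_num)
      subst hp; subst hq; subst hr
      ext t; simp only [Set.mem_insert_iff, Set.mem_singleton_iff]; try tauto
    have hbase2 : ¬(fnum p = 0 ∧ fden p = 1 ∧ fnum r = 1 ∧ fden r = 0) := by
      rintro ⟨u1, u2, u3, u4⟩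
      apply hne
      have hr : r = ⊤ := fden_eq_zero u4
      have hp : p = (0 : QInf) := qinf_ext (by rw [u1, fnum_zero]) (by rw [u2, fden_zero])
      have hq : q = (1 : QInf) :=
        qinf_ext (by rw [hn, u1, u3, fnum_one]; norm_num) (by rw [hd, u2, u4, fden_one]; norm_num)
      subst hp; subst hq; subst hr
      ext t; simp only [Set.mem_insert_iff, Set.mem_singleton_iff]; try tauto
    have hcore := core (fnum p) (fden p) (fnum r) (fden r) (fden_nonneg p) (fden_nonneg r)
      (fun h => fnum_of_fden_eq_zero h) (fun h => fnum_of_fden_eq_zero h)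
      (by rcases hA with h | h
          · exact Or.inl (by linear_combination h)
          · exact Or.inr (by linear_combination h)) hbase1 hbase2
    rw [m1, m2, m3', complexity_fmk g1, complexity_fmk g2, complexity_fmk g3,
      complexity_K p, complexity_K q, complexity_K r, hn, hd]
    rcases hcore with k | k | k
    · exact Or.inr (Or.inl ⟨
        fun hh => amo12 (fnum p) (fden p) (fnum r) (fden r) ⟨k, by linarith⟩,
        by linarith,
        fun hh => amo13 (fnum p) (fden p) (fnum r) (fden r) ⟨k, by linarith⟩⟩)
    · exact Or.inl ⟨by linarith,
        fun hh => amo12 (fnum p) (fden p) (fnum r) (fden r) ⟨by linarith, k⟩,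
        fun hh => amo23 (fnum p) (fden p) (fnum r) (fden r) ⟨k, by linarith⟩⟩
    · exact Or.inr (Or.inr ⟨
        fun hh => amo23 (fnum p) (fden p) (fnum r) (fden r) ⟨by linarith, k⟩,
        fun hh => amo13 (fnum p) (fden p) (fnum r) (fden r) ⟨by linarith, k⟩,
        by linarith⟩)
  · -- r = p ⊕ q
    have hA := nbr_cases h1
    obtain ⟨m1, m2, m2', m3, m3'⟩ := mut_eval r p q hn hd hA
    have g1 : Int.gcd (fnum p - fnum q) (fden p - fden q) = 1 :=
      gcd_of_comb (x := fden p) (y := fnum p) (by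
        rcases hA with h | h
        · exact Or.inl (by linear_combination h)
        · exact Or.inr (by linear_combination h))
    have g2 : Int.gcd (fnum p + 2 * fnum q) (fden p + 2 * fden q) = 1 :=
      gcd_of_comb (x := fden q) (y := fnum q) (by
        rcases hA with h | h
        · exact Or.inl (by linear_combination h)
        · exact Or.inr (by linear_combination h))
    have g3 : Int.gcd (2 * fnum p + fnum q) (2 * fden p + fden q) = 1 :=
      gcd_of_comb (x := fden p) (y := fnum p) (by
        rcases hA with h | h
        · exact Or.inr (by linear_combination -h)
        · exact Or.inl (by linear_combination -h))
    have hbase1 : ¬(fnum p = 1 ∧ fden p = 0 ∧ fnum q = 0 ∧ fden q = 1) := by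
      rintro ⟨u1, u2, u3, u4⟩
      apply hne
      have hp : p = ⊤ := fden_eq_zero u2
      have hq : q = (0 : QInf) := qinf_ext (by rw [u3, fnum_zero]) (by rw [u4, fden_zero])
      have hr : r = (1 : QInf) :=
        qinf_ext (by rw [hn, u1, u3, fnum_one]; norm_num) (by rw [hd, u2, u4, fden_one]; norm_num)
      subst hp; subst hq; subst hr
      ext t; simp only [Set.mem_insert_iff, Set.mem_singleton_iff]; try tauto
    have hbase2 : ¬(fnum p = 0 ∧ fden p = 1 ∧ fnum q = 1 ∧ fden q = 0) := by
      rintro ⟨u1, u2, u3, u4⟩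
      apply hne
      have hq : q = ⊤ := fden_eq_zero u4
      have hp : p = (0 : QInf) := qinf_ext (by rw [u1, fnum_zero]) (by rw [u2, fden_zero])
      have hr : r = (1 : QInf) :=
        qinf_ext (by rw [hn, u1, u3, fnum_one]; norm_num) (by rw [hd, u2, u4, fden_one]; norm_num)
      subst hp; subst hq; subst hr
      ext t; simp only [Set.mem_insert_iff, Set.mem_singleton_iff]; try tauto
    have hcore := core (fnum p) (fden p) (fnum q) (fden q) (fden_nonneg p) (fden_nonneg q)
      (fun h => fnum_of_fden_eq_zero h) (fun h => fnum_of_fden_eq_zero h)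
      (by rcases hA with h | h
          · exact Or.inl (by linear_combination h)
          · exact Or.inr (by linear_combination h)) hbase1 hbase2
    rw [m1, m2', m3', complexity_fmk g1, complexity_fmk g2, complexity_fmk g3,
      complexity_K p, complexity_K q, complexity_K r, hn, hd]
    rcases hcore with k | k | k
    · exact Or.inr (Or.inr ⟨
        fun hh => amo12 (fnum p) (fden p) (fnum q) (fden q) ⟨k, by linarith⟩,
        fun hh => amo13 (fnum p) (fden p) (fnum q) (fden q) ⟨k, by linarith⟩,
        by linarith⟩)
    · exact Or.inl ⟨by linarith,
        fun hh => amo23 (fnum p) (fden p) (fnum q) (fden q) ⟨k, by linarith⟩,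
        fun hh => amo12 (fnum p) (fden p) (fnum q) (fden q) ⟨by linarith, k⟩⟩
    · exact Or.inr (Or.inl ⟨
        fun hh => amo23 (fnum p) (fden p) (fnum q) (fden q) ⟨by linarith, k⟩,
        by linarith,
        fun hh => amo13 (fnum p) (fden p) (fnum q) (fden q) ⟨by linarith, k⟩⟩)
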